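/- arXiv:2110.00554 — 2 statements merged into one kernel-verified Lean document; each statement's English description precedes it below -/
import Mathlib

section
/- Let u_IC : ℝ → ℝ be continuously differentiable and suppose there exists ξ₀ ∈ ℝ with u_IC'(ξ₀) = m < 0. If u : ℝ × [0,T] → ℝ is a continuously differentiable solution of the inviscid Burgers' equation ∂u/∂t + u ∂u/∂x = 0 with u(x,0) = u_IC(x), then T < −1/m. In particular, no classical (C¹) solution exists on any time interval reaching or exceeding the breaking time t_b = −1/(min_x u_IC'(x)). -/
open Set

/-- If the initial condition has a point of negative slope `m`, then no classical `C¹`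
solution of the inviscid Burgers' equation exists up to (or beyond) the breaking time
`-1/m`: any solution interval `[0,T]` must satisfy `T < -1/m`. -/
theorem stmt2 (u_IC : ℝ → ℝ) (hIC : ContDiff ℝ 1 u_IC)
    (ξ₀ m : ℝ) (hξ₀ : deriv u_IC ξ₀ = m) (hm : m < 0)
    (T : ℝ) (hT : 0 ≤ T) (u : ℝ → ℝ → ℝ)
    (hu : ContDiffOn ℝ 1 (fun p : ℝ × ℝ => u p.1 p.2) (univ ×ˢ Icc 0 T))
    (hpde : ∀ (x : ℝ), ∀ t ∈ Icc (0:ℝ) T,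
      derivWithin (fun s => u x s) (Icc 0 T) t + u x t * deriv (fun y => u y t) x = 0)
    (hinit : ∀ x : ℝ, u x 0 = u_IC x) :
    T < -1 / m := by
  by_contra hc
  push_neg at hc
  -- hc : -1/m ≤ T
  have hm0 : m ≠ 0 := ne_of_lt hm
  have hts : (0:ℝ) < -1 / m := div_pos_of_neg_of_neg (by norm_num) hm
  have hT0 : 0 < T := lt_of_lt_of_le hts hc
  set S : Set (ℝ × ℝ) := univ ×ˢ Icc 0 T with hS
  set uu : ℝ × ℝ → ℝ := fun p => u p.1 p.2 with huu
  have hSud : UniqueDiffOn ℝ S := uniqueDiffOn_univ.prod (uniqueDiffOn_Icc hT0)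
  have hdiff : DifferentiableOn ℝ uu S := hu.differentiableOn one_ne_zero
  have hF : ∀ p ∈ S, HasFDerivWithinAt uu (fderivWithin ℝ uu S p) S p :=
    fun p hp => (hdiff p hp).hasFDerivWithinAt
  -- space slice derivative
  have hslice : ∀ x : ℝ, ∀ t ∈ Icc (0:ℝ) T,
      HasDerivAt (fun y => u y t) ((fderivWithin ℝ uu S (x, t)) (1, 0)) x := by
    intro x t ht
    have hmem : (x, t) ∈ S := ⟨mem_univ _, ht⟩
    have hline : HasDerivWithinAt (fun y : ℝ => (y, t)) ((1 : ℝ), (0 : ℝ)) univ x :=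
      ((hasDerivAt_id x).prodMk (hasDerivAt_const x t)).hasDerivWithinAt
    have := (hF (x, t) hmem).comp_hasDerivWithinAt x hline
      (fun y _ => (⟨mem_univ _, ht⟩ : (y, t) ∈ S))
    rw [← hasDerivWithinAt_univ]
    exact this
  -- time slice derivative
  have htime : ∀ x : ℝ, ∀ t ∈ Icc (0:ℝ) T,
      HasDerivWithinAt (fun s => u x s) ((fderivWithin ℝ uu S (x, t)) (0, 1)) (Icc 0 T) t := by
    intro x t ht
    have hmem : (x, t) ∈ S := ⟨mem_univ _, ht⟩
    have hline : HasDerivWithinAt (fun s : ℝ => (x, s)) ((0 : ℝ), (1 : ℝ)) (Icc 0 T) t :=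
      ((hasDerivAt_const t x).prodMk (hasDerivAt_id t)).hasDerivWithinAt
    exact (hF (x, t) hmem).comp_hasDerivWithinAt t hline
      (fun s hs => (⟨mem_univ _, hs⟩ : (x, s) ∈ S))
  -- the PDE in terms of fderivWithin
  have hpde' : ∀ x : ℝ, ∀ t ∈ Icc (0:ℝ) T,
      (fderivWithin ℝ uu S (x, t)) (0, 1) + u x t * (fderivWithin ℝ uu S (x, t)) (1, 0) = 0 := by
    intro x t ht
    have h1 : derivWithin (fun s => u x s) (Icc 0 T) t = (fderivWithin ℝ uu S (x, t)) (0, 1) :=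
      (htime x t ht).derivWithin ((uniqueDiffOn_Icc hT0) t ht)
    have h2 : deriv (fun y => u y t) x = (fderivWithin ℝ uu S (x, t)) (1, 0) :=
      (hslice x t ht).deriv
    have := hpde x t ht
    rw [h1, h2] at this
    exact this
  -- key: u is constant along characteristic lines
  have key : ∀ ξ : ℝ, ∀ t ∈ Icc (0:ℝ) T, u (ξ + t * u_IC ξ) t = u_IC ξ := by
    intro ξ
    set c : ℝ := u_IC ξ with hcdef
    set p : ℝ → ℝ × ℝ := fun t => (ξ + t * c, t) with hp
    set g : ℝ → ℝ := fun t => u (ξ + t * c) t - c with hg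
    have hpmaps : MapsTo p (Icc 0 T) S := fun t ht => ⟨mem_univ _, ht⟩
    have hpderiv : ∀ t : ℝ, HasDerivAt p ((c, 1)) t := by
      intro t
      exact ((hasDerivAt_mul_const c).const_add ξ).prodMk (hasDerivAt_id t)
    -- derivative of g within Icc
    have hgderiv : ∀ t ∈ Icc (0:ℝ) T,
        HasDerivWithinAt g (-(g t) * (fderivWithin ℝ uu S (p t)) (1, 0)) (Icc 0 T) t := by
      intro t ht
      have hmem : p t ∈ S := hpmaps ht
      have comp := (hF (p t) hmem).comp_hasDerivWithinAt t
        ((hpderiv t).hasDerivWithinAt) hpmaps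
      have hval : (fderivWithin ℝ uu S (p t)) (c, 1)
          = -(g t) * (fderivWithin ℝ uu S (p t)) (1, 0) := by
        have hsplit : ((c, 1) : ℝ × ℝ) = c • ((1 : ℝ), (0 : ℝ)) + ((0 : ℝ), (1 : ℝ)) := by
          simp
        rw [hsplit, map_add, map_smul, smul_eq_mul]
        have hthis := hpde' (ξ + t * c) t ht
        have hux : u (ξ + t * c) t = g t + c := by simp [hg]
        rw [hux] at hthis
        rw [show p t = (ξ + t * c, t) from rfl]
        linear_combination hthis
      have : HasDerivWithinAt (uu ∘ p) (-(g t) * (fderivWithin ℝ uu S (p t)) (1, 0))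
          (Icc 0 T) t := hval ▸ comp
      simpa [hg, hp, huu, Function.comp] using this.sub_const c
    -- bound on the coefficient
    have hcont : ContinuousOn (fun t => (fderivWithin ℝ uu S (p t)) (1, 0)) (Icc 0 T) := by
      have h1 : ContinuousOn (fderivWithin ℝ uu S) S :=
        hu.continuousOn_fderivWithin hSud le_rfl
      have hpc : ContinuousOn p (Icc 0 T) :=
        ((continuous_const.add (continuous_id.mul continuous_const)).prodMk
          continuous_id).continuousOn
      exact ((h1.comp hpc hpmaps).clm_apply continuousOn_const)
    obtain ⟨K, hK⟩ := (isCompact_Icc).exists_bound_of_continuousOn hcont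
    -- Gronwall
    have hgcont : ContinuousOn g (Icc 0 T) := by
      have hpc : ContinuousOn p (Icc 0 T) :=
        ((continuous_const.add (continuous_id.mul continuous_const)).prodMk
          continuous_id).continuousOn
      have h2 : ContinuousOn (fun t => uu (p t) - c) (Icc 0 T) :=
        (hu.continuousOn.comp hpc hpmaps).sub continuousOn_const
      exact h2
    have hg0 : ‖g 0‖ ≤ 0 := by
      simp [hg, hcdef, hinit ξ]
    have hbound := norm_le_gronwallBound_of_norm_deriv_right_le (f := g)
      (f' := fun t => -(g t) * (fderivWithin ℝ uu S (p t)) (1, 0)) (δ := 0) (K := K) (ε := 0)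
      (a := 0) (b := T) hgcont ?_ hg0 ?_
    · intro t ht
      have := hbound t ht
      rw [gronwallBound_ε0_δ0] at this
      have : g t = 0 := by
        have h0 : ‖g t‖ ≤ 0 := by simpa using this
        simpa using le_antisymm h0 (norm_nonneg _)
      have : u (ξ + t * c) t - c = 0 := this
      linarith [this]
    · intro t ht
      have h1 := hgderiv t ⟨ht.1, le_of_lt ht.2⟩
      have h2 : HasDerivWithinAt g (-(g t) * (fderivWithin ℝ uu S (p t)) (1, 0)) (Icc t T) t :=
        h1.mono (Icc_subset_Icc_left ht.1)
      rw [← Ici_inter_Iic] at h2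
      exact (hasDerivWithinAt_inter (Iic_mem_nhds ht.2)).mp h2
    · intro t ht
      have hKt := hK t ⟨ht.1, le_of_lt ht.2⟩
      have h1 : ‖(-(g t)) * (fderivWithin ℝ uu S (p t)) (1, 0)‖
          = ‖g t‖ * ‖(fderivWithin ℝ uu S (p t)) (1, 0)‖ := by
        rw [norm_mul, norm_neg]
      rw [h1]
      have := mul_le_mul_of_nonneg_left hKt (norm_nonneg (g t))
      linarith [this]
  -- now differentiate in ξ at the breaking time
  set ts : ℝ := -1 / m with hts'
  have htsmem : ts ∈ Icc (0:ℝ) T := ⟨le_of_lt hts, hc⟩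
  have hdIC : HasDerivAt u_IC m ξ₀ := by
    have := (hIC.differentiable one_ne_zero ξ₀).hasDerivAt
    rwa [hξ₀] at this
  set Φ : ℝ → ℝ := fun ξ => ξ + ts * u_IC ξ with hΦ
  have hΦd : HasDerivAt Φ 0 ξ₀ := by
    have h1 : HasDerivAt Φ (1 + ts * m) ξ₀ :=
      (hasDerivAt_id ξ₀).add (hdIC.const_mul ts)
    have h2 : 1 + ts * m = 0 := by
      rw [hts', div_mul_cancel₀ (-1 : ℝ) hm0]
      norm_num
    rwa [h2] at h1
  have hvd : HasDerivAt (fun y => u y ts) ((fderivWithin ℝ uu S (Φ ξ₀, ts)) (1, 0)) (Φ ξ₀) :=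
    hslice (Φ ξ₀) ts htsmem
  have hcomp : HasDerivAt ((fun y => u y ts) ∘ Φ)
      ((fderivWithin ℝ uu S (Φ ξ₀, ts)) (1, 0) * 0) ξ₀ := hvd.comp ξ₀ hΦd
  have heq : ((fun y => u y ts) ∘ Φ) = u_IC := by
    funext ξ
    exact key ξ ts htsmem
  rw [heq, mul_zero] at hcomp
  have : m = 0 := hdIC.unique hcomp
  exact hm0 this
end

section
/- Let ν > 0, let D ⊆ ℝ × ℝ be open, and let φ : D → ℝ be twice continuously differentiable, strictly positive on D, and satisfy the heat equation ∂φ/∂t = ν ∂²φ/∂x² on D. Then the function u := −2ν (∂φ/∂x)/φ satisfies the viscous Burgers' equation ∂u/∂t + u ∂u/∂x = ν ∂²u/∂x² on D (Hopf–Cole transformation). -/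
open Set

/-- Hopf–Cole transformation: if `φ` is positive and solves the heat equation
`φ_t = ν φ_xx` on an open set `D`, then `u = −2ν φ_x/φ` solves the viscous Burgers'
equation `u_t + u u_x = ν u_xx` on `D`. -/
theorem stmt7 (ν : ℝ) (hν : 0 < ν) (D : Set (ℝ × ℝ)) (hD : IsOpen D)
    (φ : ℝ → ℝ → ℝ)
    (hφ : ContDiffOn ℝ 2 (fun p : ℝ × ℝ => φ p.1 p.2) D)
    (hpos : ∀ p ∈ D, 0 < φ p.1 p.2)
    (hheat : ∀ p ∈ D,
      deriv (fun s => φ p.1 s) p.2 = ν * deriv (deriv (fun y => φ y p.2)) p.1)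
    (u : ℝ → ℝ → ℝ)
    (hu : ∀ x t, u x t = -2 * ν * deriv (fun y => φ y t) x / φ x t) :
    ∀ p ∈ D,
      deriv (fun s => u p.1 s) p.2 + u p.1 p.2 * deriv (fun y => u y p.2) p.1
        = ν * deriv (deriv (fun y => u y p.2)) p.1 := by
  intro p hp
  set F : ℝ × ℝ → ℝ := fun q => φ q.1 q.2 with hFdef
  set H : ℝ × ℝ → (ℝ × ℝ) →L[ℝ] (ℝ × ℝ) →L[ℝ] ℝ := fderiv ℝ (fderiv ℝ F) with hHdef
  have hCA : ∀ q ∈ D, ContDiffAt ℝ 2 F q := fun q hq => hφ.contDiffAt (hD.mem_nhds hq)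
  have hdF : ∀ q ∈ D, DifferentiableAt ℝ F q := fun q hq =>
    (hCA q hq).differentiableAt two_ne_zero
  have hdF' : ∀ q ∈ D, HasFDerivAt (fderiv ℝ F) (H q) q := fun q hq =>
    (((hCA q hq).fderiv_right (le_refl 2)).differentiableAt one_ne_zero).hasFDerivAt
  have hsymm : ∀ q ∈ D, ∀ v w, H q v w = H q w v := fun q hq =>
    (hCA q hq).isSymmSndFDerivAt (by simp [minSmoothness_of_isRCLikeNormedField])
  have hlinex : ∀ (b y : ℝ), HasDerivAt (fun y' : ℝ => ((y', b) : ℝ × ℝ)) (1, 0) y :=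
    fun b y => (hasDerivAt_id y).prodMk (hasDerivAt_const y b)
  have hlinet : ∀ (a s : ℝ), HasDerivAt (fun s' : ℝ => ((a, s') : ℝ × ℝ)) (0, 1) s :=
    fun a s => (hasDerivAt_const s a).prodMk (hasDerivAt_id s)
  have hx : ∀ q ∈ D, HasDerivAt (fun y => φ y q.2) (fderiv ℝ F q (1, 0)) q.1 := fun q hq =>
    by have := (hdF q hq).hasFDerivAt.comp_hasDerivAt q.1 (hlinex q.2 q.1); exact this
  have ht : ∀ q ∈ D, HasDerivAt (fun s => φ q.1 s) (fderiv ℝ F q (0, 1)) q.2 := fun q hq =>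
    by have := (hdF q hq).hasFDerivAt.comp_hasDerivAt q.2 (hlinet q.1 q.2); exact this
  have hgx : ∀ (v : ℝ × ℝ), ∀ q ∈ D,
      HasDerivAt (fun y => fderiv ℝ F (y, q.2) v) (H q (1, 0) v) q.1 := by
    intro v q hq
    have h1 : HasFDerivAt (fun q' => fderiv ℝ F q' v)
        ((ContinuousLinearMap.apply ℝ ℝ v).comp (H q)) q :=
      (ContinuousLinearMap.apply ℝ ℝ v).hasFDerivAt.comp q (hdF' q hq)
    exact h1.comp_hasDerivAt q.1 (hlinex q.2 q.1)
  have hgt : ∀ (v : ℝ × ℝ), ∀ q ∈ D,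
      HasDerivAt (fun s => fderiv ℝ F (q.1, s) v) (H q (0, 1) v) q.2 := by
    intro v q hq
    have h1 : HasFDerivAt (fun q' => fderiv ℝ F q' v)
        ((ContinuousLinearMap.apply ℝ ℝ v).comp (H q)) q :=
      (ContinuousLinearMap.apply ℝ ℝ v).hasFDerivAt.comp q (hdF' q hq)
    exact h1.comp_hasDerivAt q.2 (hlinet q.1 q.2)
  have hev : ∀ q ∈ D, ∀ᶠ y in nhds q.1, (y, q.2) ∈ D := fun q hq =>
    (continuous_id.prodMk continuous_const).continuousAt.preimage_mem_nhds (hD.mem_nhds hq)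
  have hevt : ∀ q ∈ D, ∀ᶠ s in nhds q.2, (q.1, s) ∈ D := fun q hq =>
    (continuous_const.prodMk continuous_id).continuousAt.preimage_mem_nhds (hD.mem_nhds hq)
  -- second x-derivative of slices
  have hxx : ∀ q ∈ D, deriv (deriv (fun y => φ y q.2)) q.1 = H q (1, 0) (1, 0) := by
    intro q hq
    have he : deriv (fun y => φ y q.2) =ᶠ[nhds q.1] fun y => fderiv ℝ F (y, q.2) (1, 0) := by
      filter_upwards [hev q hq] with y hy
      exact (hx (y, q.2) hy).deriv
    rw [he.deriv_eq, (hgx (1, 0) q hq).deriv]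
  -- heat equation in fderiv form
  have heat' : ∀ q ∈ D, fderiv ℝ F q (0, 1) = ν * H q (1, 0) (1, 0) := by
    intro q hq
    have h := hheat q hq
    rwa [(ht q hq).deriv, hxx q hq] at h
  -- representation of u along x-slices
  have hevu : ∀ q ∈ D, (fun y => u y q.2) =ᶠ[nhds q.1]
      fun y => -2 * ν * fderiv ℝ F (y, q.2) (1, 0) / F (y, q.2) := by
    intro q hq
    filter_upwards [hev q hq] with y hy
    rw [hu y q.2, (hx (y, q.2) hy).deriv]
  -- x-derivative of u
  have hux : ∀ q ∈ D, HasDerivAt (fun y => u y q.2)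
      ((-2 * ν * H q (1, 0) (1, 0) * F q -
        -2 * ν * fderiv ℝ F q (1, 0) * fderiv ℝ F q (1, 0)) / F q ^ 2) q.1 := by
    intro q hq
    have hne : F q ≠ 0 := (hpos q hq).ne'
    have hnum : HasDerivAt (fun y => -2 * ν * fderiv ℝ F (y, q.2) (1, 0))
        (-2 * ν * H q (1, 0) (1, 0)) q.1 := by
      simpa [mul_comm] using (hgx (1, 0) q hq).const_mul (-2 * ν)
    have hden : HasDerivAt (fun y => F (y, q.2)) (fderiv ℝ F q (1, 0)) q.1 := hx q hq
    exact (hnum.div hden hne).congr_of_eventuallyEq (hevu q hq)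
  -- t-derivative of u at p
  have hevut : (fun s => u p.1 s) =ᶠ[nhds p.2]
      fun s => -2 * ν * fderiv ℝ F (p.1, s) (1, 0) / F (p.1, s) := by
    filter_upwards [hevt p hp] with s hs
    rw [hu p.1 s, (hx (p.1, s) hs).deriv]
  have hut : HasDerivAt (fun s => u p.1 s)
      ((-2 * ν * H p (0, 1) (1, 0) * F p -
        -2 * ν * fderiv ℝ F p (1, 0) * fderiv ℝ F p (0, 1)) / F p ^ 2) p.2 := by
    have hne : F p ≠ 0 := (hpos p hp).ne'
    have hnum : HasDerivAt (fun s => -2 * ν * fderiv ℝ F (p.1, s) (1, 0))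
        (-2 * ν * H p (0, 1) (1, 0)) p.2 := by
      simpa [mul_comm] using (hgt (1, 0) p hp).const_mul (-2 * ν)
    have hden : HasDerivAt (fun s => F (p.1, s)) (fderiv ℝ F p (0, 1)) p.2 := ht p hp
    exact (hnum.div hden hne).congr_of_eventuallyEq hevut
  -- second x-derivative of u
  set P : ℝ := F p with hP
  set Px : ℝ := fderiv ℝ F p (1, 0) with hPx
  set Pt : ℝ := fderiv ℝ F p (0, 1) with hPt
  set Pxx : ℝ := H p (1, 0) (1, 0) with hPxx
  set Pxt : ℝ := H p (1, 0) (0, 1) with hPxt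
  have hPpos : 0 < P := hpos p hp
  have hPne : P ≠ 0 := hPpos.ne'
  have hA : HasDerivAt (fun y => H (y, p.2) (1, 0) (1, 0)) (Pxt / ν) p.1 := by
    have he : (fun y => H (y, p.2) (1, 0) (1, 0)) =ᶠ[nhds p.1]
        fun y => fderiv ℝ F (y, p.2) (0, 1) / ν := by
      filter_upwards [hev p hp] with y hy
      rw [heat' (y, p.2) hy]
      field_simp
    exact ((hgx (0, 1) p hp).div_const ν).congr_of_eventuallyEq he
  have hB : HasDerivAt (fun y => fderiv ℝ F (y, p.2) (1, 0)) Pxx p.1 := hgx (1, 0) p hp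
  have hC : HasDerivAt (fun y => F (y, p.2)) Px p.1 := hx p hp
  have hnumW : HasDerivAt
      (fun y => -2 * ν * H (y, p.2) (1, 0) (1, 0) * F (y, p.2) -
        -2 * ν * fderiv ℝ F (y, p.2) (1, 0) * fderiv ℝ F (y, p.2) (1, 0))
      ((-2 * ν * (Pxt / ν) * P + -2 * ν * Pxx * Px) -
        (-2 * ν * Pxx * Px + -2 * ν * Px * Pxx)) p.1 := by
    have h1 : HasDerivAt (fun y => -2 * ν * H (y, p.2) (1, 0) (1, 0))
        (-2 * ν * (Pxt / ν)) p.1 := by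
      simpa [mul_comm] using hA.const_mul (-2 * ν)
    have h2 : HasDerivAt (fun y => -2 * ν * fderiv ℝ F (y, p.2) (1, 0))
        (-2 * ν * Pxx) p.1 := by
      simpa [mul_comm] using hB.const_mul (-2 * ν)
    exact (h1.mul hC).sub (h2.mul hB)
  have hdivW := hnumW.fun_div (hC.fun_pow 2) (pow_ne_zero 2 hPne)
  have hWeq : deriv (fun y => u y p.2) =ᶠ[nhds p.1]
      (fun y => (-2 * ν * H (y, p.2) (1, 0) (1, 0) * F (y, p.2) -
        -2 * ν * fderiv ℝ F (y, p.2) (1, 0) * fderiv ℝ F (y, p.2) (1, 0)) / F (y, p.2) ^ 2) := by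
    filter_upwards [hev p hp] with y hy
    exact (hux (y, p.2) hy).deriv
  have hsy : H p (0, 1) (1, 0) = Pxt := hsymm p hp (0, 1) (1, 0)
  have hheatp : Pt = ν * Pxx := heat' p hp
  have hφP : φ p.1 p.2 = P := rfl
  rw [hut.deriv, (hux p hp).deriv, hWeq.deriv_eq, hdivW.deriv, hu p.1 p.2, (hx p hp).deriv,
    hφP, hsy]
  rw [hheatp]
  have hνne : ν ≠ 0 := hν.ne'
  simp only [Prod.mk.eta, ← hP, ← hPx, ← hPxx]
  field_simp
  ring
end
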